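/- arXiv:2209.05574 — 10 statements merged into one kernel-verified Lean document; each statement's English description precedes it below -/
import Mathlib

section
/- Let v0, v1, d, a be real numbers with d > 0 and a > 0, and let Ξ⁰ be the 2×2 matrix [[v0, v1 − a], [v0 + d, v0 + d − a]]. Then Ξ⁰ has no pure saddle point if and only if v1 > v0 + max{d, a}. -/
open Matrix

/-- A pure saddle point of a 2×2 matrix game where the row player minimizes and
the column player maximizes: M(i*,j*) ≤ M(i,j*) for all i and M(i*,j*) ≥ M(i*,j) for all j. -/
def HasPureSaddle (M : Matrix (Fin 2) (Fin 2) ℝ) : Prop :=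
  ∃ i j, (∀ i', M i j ≤ M i' j) ∧ (∀ j', M i j' ≤ M i j)

/-- the defender-control cost-to-go matrix Ξ⁰ has no pure saddle point
iff v1 > v0 + max{d, a}. -/
theorem stmt_2 (v0 v1 d a : ℝ) (hd : 0 < d) (ha : 0 < a) :
    ¬ HasPureSaddle !![v0, v1 - a; v0 + d, v0 + d - a] ↔ v1 > v0 + max d a := by
  constructor
  · intro h
    by_contra hle
    push_neg at hle
    apply h
    rcases le_or_gt v1 (v0 + a) with hva | hva
    · exact ⟨0, 0, by intro i'; fin_cases i' <;> simp <;> linarith,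
            by intro j'; fin_cases j' <;> simp <;> linarith⟩
    · have hvd : v1 ≤ v0 + d := by
        rcases max_cases d a with ⟨he, _⟩ | ⟨he, _⟩ <;> rw [he] at hle <;> linarith
      exact ⟨0, 1, by intro i'; fin_cases i' <;> simp <;> linarith,
            by intro j'; fin_cases j' <;> simp <;> linarith⟩
  · rintro hgt ⟨i, j, h1, h2⟩
    have hd1 : v1 > v0 + d := lt_of_le_of_lt (by simp [le_max_left]) hgt
    have ha1 : v1 > v0 + a := lt_of_le_of_lt (by simp [le_max_right]) hgt
    fin_cases i <;> fin_cases j <;>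
      [skip; skip; skip; skip] <;>
      first
        | (have := h1 1; have := h2 1; simp_all; linarith)
        | (have := h1 0; have := h2 0; simp_all; linarith)
        | (have := h1 1; have := h2 0; simp_all; linarith)
        | (have := h1 0; have := h2 1; simp_all; linarith)
end

section
/- Let v0, v1, d, a be real numbers with d > 0 and a > 0, and let Ξ¹ be the 2×2 matrix [[v1, v1 − a], [v0 + d, v1 + d − a]]. Then Ξ¹ has no pure saddle point if and only if v1 > v0 + max{d, a}. -/
open Matrix

/-- the adversary-control cost-to-go matrix Ξ¹ has no pure saddle point
iff v1 > v0 + max{d, a}. -/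
theorem stmt_3 (v0 v1 d a : ℝ) (hd : 0 < d) (ha : 0 < a) :
    ¬ HasPureSaddle !![v1, v1 - a; v0 + d, v1 + d - a] ↔ v1 > v0 + max d a := by
  simp [HasPureSaddle, Fin.exists_fin_two, Fin.forall_fin_two]
  have hm1 := le_max_left d a
  have hm2 := le_max_right d a
  constructor
  · rintro ⟨⟨h1, _⟩, h2, _⟩
    rcases le_or_gt v1 (v0 + d) with hc | hc
    · linarith [h1 hc]
    · have hmax : max d a < v1 - v0 := max_lt (by linarith) (by linarith [h2 hc.le])
      simpa [gt_iff_lt] using by linarith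
  · intro h
    refine ⟨⟨fun hc => absurd hc (not_le.2 (by linarith)), fun _ => ha⟩,
      fun _ => by linarith, fun hc => absurd hc (not_le.2 hd)⟩
end

section
/- Let v0, v1, d, a, g be real numbers with d > 0, a > 0, and v1 > v0 + max{d, a}, and let Ξ⁰ be the 2×2 matrix [[v0, v1 − a], [v0 + d, v0 + d − a]]. Then the strategies y* = (a/(v1 − v0), 1 − a/(v1 − v0)) and z* = (1 − d/(v1 − v0), d/(v1 − v0)) lie in Δ₂, form a mixed saddle point of Ξ⁰, and the resulting value satisfies g + y*ᵀ Ξ⁰ z* = g + d + v0 − d·a/(v1 − v0). -/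
open Matrix

/-- The probability simplex in ℝ²: vectors (β, 1-β) with β ∈ [0,1]. -/
def Δ₂ : Set (Fin 2 → ℝ) := {y | 0 ≤ y 0 ∧ 0 ≤ y 1 ∧ y 0 + y 1 = 1}

/-- Payoff yᵀ M z for a 2×2 matrix game. -/
def payoff (M : Matrix (Fin 2) (Fin 2) ℝ) (y z : Fin 2 → ℝ) : ℝ :=
  y 0 * M 0 0 * z 0 + y 0 * M 0 1 * z 1 + y 1 * M 1 0 * z 0 + y 1 * M 1 1 * z 1

/-- Mixed saddle point of M: row player minimizes, column player maximizes. -/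
def IsMixedSaddle (M : Matrix (Fin 2) (Fin 2) ℝ) (ys zs : Fin 2 → ℝ) : Prop :=
  ys ∈ Δ₂ ∧ zs ∈ Δ₂ ∧
    (∀ z ∈ Δ₂, payoff M ys z ≤ payoff M ys zs) ∧
    (∀ y ∈ Δ₂, payoff M ys zs ≤ payoff M y zs)

/-- mixed saddle point and value of the FlipDyn game matrix Ξ⁰
(defender in control). -/
theorem stmt_4 (v0 v1 d a g : ℝ) (hd : 0 < d) (ha : 0 < a)
    (hv : v1 > v0 + max d a) :
    let M : Matrix (Fin 2) (Fin 2) ℝ := !![v0, v1 - a; v0 + d, v0 + d - a]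
    let ys : Fin 2 → ℝ := ![a / (v1 - v0), 1 - a / (v1 - v0)]
    let zs : Fin 2 → ℝ := ![1 - d / (v1 - v0), d / (v1 - v0)]
    ys ∈ Δ₂ ∧ zs ∈ Δ₂ ∧ IsMixedSaddle M ys zs ∧
    g + payoff M ys zs = g + d + v0 - d * a / (v1 - v0) := by
  intro M ys zs
  have hΔ : 0 < v1 - v0 := by
    have h1 := le_max_left d a
    linarith
  have hne : v1 - v0 ≠ 0 := ne_of_gt hΔ
  have hda : d < v1 - v0 := by have := le_max_left d a; linarith
  have haa : a < v1 - v0 := by have := le_max_right d a; linarith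
  have hys : ys ∈ Δ₂ := by
    refine ⟨?_, ?_, by simp [ys]⟩
    · simp only [ys, Matrix.cons_val_zero]; positivity
    simp only [ys, Matrix.cons_val_one, Matrix.head_cons, Matrix.cons_val_zero]
    have : a / (v1 - v0) ≤ 1 := by
      rw [div_le_one hΔ]; linarith
    linarith
  have hzs : zs ∈ Δ₂ := by
    refine ⟨?_, ?_, by simp [zs]⟩
    swap
    · simp only [zs, Matrix.cons_val_one, Matrix.head_cons, Matrix.cons_val_zero]; positivity
    simp only [zs, Matrix.cons_val_zero]
    have : d / (v1 - v0) ≤ 1 := by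
      rw [div_le_one hΔ]; linarith
    linarith
  have hrow : ∀ z ∈ Δ₂, payoff M ys z = v0 + d - d * a / (v1 - v0) := by
    intro z hz
    obtain ⟨_, _, hsum⟩ := hz
    simp only [payoff, M, ys, Matrix.cons_val_zero, Matrix.cons_val_one,
      Matrix.head_cons, Matrix.cons_val', Matrix.empty_val',
      Matrix.cons_val_fin_one, Matrix.head_fin_const, Matrix.of_apply]
    field_simp
    linear_combination ((v1 - v0) * (v0 + d) - d * a) * hsum
  have hcol : ∀ y ∈ Δ₂, payoff M y zs = v0 + d - d * a / (v1 - v0) := by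
    intro y hy
    obtain ⟨_, _, hsum⟩ := hy
    simp only [payoff, M, zs, Matrix.cons_val_zero, Matrix.cons_val_one,
      Matrix.head_cons, Matrix.cons_val', Matrix.empty_val',
      Matrix.cons_val_fin_one, Matrix.head_fin_const, Matrix.of_apply]
    field_simp
    linear_combination ((v1 - v0) * (v0 + d) - d * a) * hsum
  have hval : payoff M ys zs = v0 + d - d * a / (v1 - v0) := hrow zs hzs
  refine ⟨hys, hzs, ⟨hys, hzs, ?_, ?_⟩, by rw [hval]; ring⟩
  · intro z hz; rw [hrow z hz, hval]
  · intro y hy; rw [hcol y hy, hval]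
end

section
/- Let v0, v1, d, a, g be real numbers with d > 0, a > 0, and v1 > v0 + max{d, a}, and let Ξ¹ be the 2×2 matrix [[v1, v1 − a], [v0 + d, v1 + d − a]]. Then the strategies y* = (1 − a/(v1 − v0), a/(v1 − v0)) and z* = (d/(v1 − v0), 1 − d/(v1 − v0)) lie in Δ₂, form a mixed saddle point of Ξ¹, and the resulting value satisfies g + y*ᵀ Ξ¹ z* = g − a + v1 + d·a/(v1 − v0). -/
open Matrix

/-- mixed saddle point and value of the FlipDyn game matrix Ξ¹
(adversary in control). -/
theorem stmt_5 (v0 v1 d a g : ℝ) (hd : 0 < d) (ha : 0 < a)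
    (hv : v1 > v0 + max d a) :
    let M : Matrix (Fin 2) (Fin 2) ℝ := !![v1, v1 - a; v0 + d, v1 + d - a]
    let ys : Fin 2 → ℝ := ![1 - a / (v1 - v0), a / (v1 - v0)]
    let zs : Fin 2 → ℝ := ![d / (v1 - v0), 1 - d / (v1 - v0)]
    ys ∈ Δ₂ ∧ zs ∈ Δ₂ ∧ IsMixedSaddle M ys zs ∧
    g + payoff M ys zs = g - a + v1 + d * a / (v1 - v0) := by
  intro M ys zs
  have hda : d ≤ max d a := le_max_left d a
  have haa : a ≤ max d a := le_max_right d a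
  have hs : (0:ℝ) < v1 - v0 := by
    have := lt_of_lt_of_le hd hda; linarith
  have hs0 : v1 - v0 ≠ 0 := ne_of_gt hs
  have hya : a / (v1 - v0) ≤ 1 := by
    rw [div_le_one hs]; linarith
  have hyb : 0 ≤ a / (v1 - v0) := le_of_lt (div_pos ha hs)
  have hza : d / (v1 - v0) ≤ 1 := by
    rw [div_le_one hs]; linarith
  have hzb : 0 ≤ d / (v1 - v0) := le_of_lt (div_pos hd hs)
  have hys : ys ∈ Δ₂ := by
    refine ⟨by simp [ys]; linarith, by simpa [ys] using hyb, by simp [ys]⟩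
  have hzs : zs ∈ Δ₂ := by
    refine ⟨by simpa [zs] using hzb, by simp [zs]; linarith, by simp [zs]⟩
  -- payoff against ys is constant
  have hrow : ∀ z : Fin 2 → ℝ, z 0 + z 1 = 1 →
      payoff M ys z = v1 - a + d * a / (v1 - v0) := by
    intro z hz
    have hz1 : z 1 = 1 - z 0 := by linarith
    simp only [payoff, M, ys, Matrix.cons_val_zero, Matrix.cons_val_one,
      Matrix.head_cons, Matrix.of_apply, Matrix.cons_val', Matrix.empty_val',
      Matrix.cons_val_fin_one, Matrix.head_fin_const, hz1]
    field_simp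
    ring
  have hcol : ∀ y : Fin 2 → ℝ, y 0 + y 1 = 1 →
      payoff M y zs = v1 - a + d * a / (v1 - v0) := by
    intro y hy
    have hy1 : y 1 = 1 - y 0 := by linarith
    simp only [payoff, M, zs, Matrix.cons_val_zero, Matrix.cons_val_one,
      Matrix.head_cons, Matrix.of_apply, Matrix.cons_val', Matrix.empty_val',
      Matrix.cons_val_fin_one, Matrix.head_fin_const, hy1]
    field_simp
    ring
  have hval : payoff M ys zs = v1 - a + d * a / (v1 - v0) := hrow zs hzs.2.2
  refine ⟨hys, hzs, ⟨hys, hzs, ?_, ?_⟩, by rw [hval]; ring⟩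
  · intro z hz; rw [hrow z hz.2.2, hval]
  · intro y hy; rw [hcol y hy.2.2, hval]
end

section
/- Let F, B, K, W, g, d, a, p0, p1 be real numbers with d > 0, a > 0, p0 ≥ 0, p1 ≥ 0, and suppose p̃ := (F + B·W)²·p1 − (F − B·K)²·p0 satisfies p̃ > max{d, a}. Fix any real x ≠ 0 and let Ξ⁰(x) be the 2×2 matrix with entries m11 = p0·((F − B·K)·x)², m12 = p1·((F + B·W)·x)² − a·x², m21 = m11 + d·x², m22 = m11 + (d − a)·x². Then the state-independent strategies y* = (a/p̃, (p̃ − a)/p̃) and z* = ((p̃ − d)/p̃, d/p̃) lie in Δ₂ and form a mixed saddle point of Ξ⁰(x), and the value satisfies g·x² + y*ᵀ Ξ⁰(x) z* = p0ₖ·x², where p0ₖ := g + (F − B·K)²·p0 + d − d·a/p̃. -/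
open Matrix

/-- scalar FlipDyn game, defender-controlled state: the
state-independent strategies form a mixed saddle point of Ξ⁰(x), with
quadratic value p0ₖ·x². -/
theorem stmt_7 (F B K W g d a p0 p1 : ℝ) (hd : 0 < d) (ha : 0 < a)
    (hp0 : 0 ≤ p0) (hp1 : 0 ≤ p1)
    (hpt : (F + B * W) ^ 2 * p1 - (F - B * K) ^ 2 * p0 > max d a)
    (x : ℝ) (hx : x ≠ 0) :
    let pt : ℝ := (F + B * W) ^ 2 * p1 - (F - B * K) ^ 2 * p0
    let m11 : ℝ := p0 * ((F - B * K) * x) ^ 2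
    let M : Matrix (Fin 2) (Fin 2) ℝ :=
      !![m11, p1 * ((F + B * W) * x) ^ 2 - a * x ^ 2;
         m11 + d * x ^ 2, m11 + (d - a) * x ^ 2]
    let ys : Fin 2 → ℝ := ![a / pt, (pt - a) / pt]
    let zs : Fin 2 → ℝ := ![(pt - d) / pt, d / pt]
    ys ∈ Δ₂ ∧ zs ∈ Δ₂ ∧ IsMixedSaddle M ys zs ∧
    g * x ^ 2 + payoff M ys zs
      = (g + (F - B * K) ^ 2 * p0 + d - d * a / pt) * x ^ 2 := by
  intro pt m11 M ys zs
  have hptd : d < pt := lt_of_le_of_lt (le_max_left d a) hpt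
  have hpta : a < pt := lt_of_le_of_lt (le_max_right d a) hpt
  have hpt0 : 0 < pt := hd.trans hptd
  have hptne : pt ≠ 0 := ne_of_gt hpt0
  have hys : ys ∈ Δ₂ := by
    refine ⟨?_, ?_, ?_⟩
    · show 0 ≤ a / pt
      positivity
    · show 0 ≤ (pt - a) / pt
      apply div_nonneg (by linarith) hpt0.le
    · show a / pt + (pt - a) / pt = 1
      field_simp
      ring
  have hzs : zs ∈ Δ₂ := by
    refine ⟨?_, ?_, ?_⟩
    · show 0 ≤ (pt - d) / pt
      apply div_nonneg (by linarith) hpt0.le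
    · show 0 ≤ d / pt
      positivity
    · show (pt - d) / pt + d / pt = 1
      field_simp
      ring
  -- payoff M ys z is constant in z (given z 0 + z 1 = 1)
  have hpt_eq : (F + B * W) ^ 2 * p1 = pt + (F - B * K) ^ 2 * p0 := by
    simp only [pt]; ring
  have hrow : ∀ z : Fin 2 → ℝ, z 0 + z 1 = 1 →
      payoff M ys z = m11 + d * (pt - a) / pt * x ^ 2 := by
    intro z hz
    have hz1 : z 1 = 1 - z 0 := by linarith
    simp only [payoff, M, ys, Matrix.cons_val', Matrix.cons_val_zero,
      Matrix.cons_val_one, Matrix.head_cons, Matrix.empty_val',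
      Matrix.cons_val_fin_one, Matrix.head_fin_const, Matrix.of_apply, hz1]
    have : p1 * ((F + B * W) * x) ^ 2 = (pt + (F - B * K) ^ 2 * p0) * x ^ 2 := by
      rw [mul_pow, ← mul_assoc, mul_comm p1, hpt_eq]
    rw [this]
    simp only [m11]
    field_simp
    ring
  have hcol : ∀ y : Fin 2 → ℝ, y 0 + y 1 = 1 →
      payoff M y zs = m11 + d * (pt - a) / pt * x ^ 2 := by
    intro y hy
    have hy1 : y 1 = 1 - y 0 := by linarith
    simp only [payoff, M, zs, Matrix.cons_val', Matrix.cons_val_zero,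
      Matrix.cons_val_one, Matrix.head_cons, Matrix.empty_val',
      Matrix.cons_val_fin_one, Matrix.head_fin_const, Matrix.of_apply, hy1]
    have : p1 * ((F + B * W) * x) ^ 2 = (pt + (F - B * K) ^ 2 * p0) * x ^ 2 := by
      rw [mul_pow, ← mul_assoc, mul_comm p1, hpt_eq]
    rw [this]
    simp only [m11]
    field_simp
    ring
  have hval : payoff M ys zs = m11 + d * (pt - a) / pt * x ^ 2 :=
    hrow zs hzs.2.2
  refine ⟨hys, hzs, ⟨hys, hzs, ?_, ?_⟩, ?_⟩
  · intro z hz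
    rw [hrow z hz.2.2, hval]
  · intro y hy
    rw [hcol y hy.2.2, hval]
  · rw [hval]
    simp only [m11]
    field_simp
    ring
end

section
/- Let F, B, K, W, g, d, a, p0, p1 be real numbers with d > 0, a > 0, p0 ≥ 0, p1 ≥ 0, and suppose p̃ := (F + B·W)²·p1 − (F − B·K)²·p0 satisfies p̃ > max{d, a}. Fix any real x ≠ 0 and let Ξ¹(x) be the 2×2 matrix with entries m11 = p1·((F + B·W)·x)², m12 = m11 − a·x², m21 = p0·((F − B·K)·x)² + d·x², m22 = m11 + (d − a)·x². Then the state-independent strategies y* = ((p̃ − a)/p̃, a/p̃) and z* = (d/p̃, (p̃ − d)/p̃) lie in Δ₂ and form a mixed saddle point of Ξ¹(x), and the value satisfies g·x² + y*ᵀ Ξ¹(x) z* = p1ₖ·x², where p1ₖ := g + (F + B·W)²·p1 − a + d·a/p̃. -/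
open Matrix

/-- scalar FlipDyn game, adversary-controlled state: the
state-independent strategies form a mixed saddle point of Ξ¹(x), with
quadratic value p1ₖ·x². -/
theorem stmt_8 (F B K W g d a p0 p1 : ℝ) (hd : 0 < d) (ha : 0 < a)
    (hp0 : 0 ≤ p0) (hp1 : 0 ≤ p1)
    (hpt : (F + B * W) ^ 2 * p1 - (F - B * K) ^ 2 * p0 > max d a)
    (x : ℝ) (hx : x ≠ 0) :
    let pt : ℝ := (F + B * W) ^ 2 * p1 - (F - B * K) ^ 2 * p0
    let m11 : ℝ := p1 * ((F + B * W) * x) ^ 2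
    let M : Matrix (Fin 2) (Fin 2) ℝ :=
      !![m11, m11 - a * x ^ 2;
         p0 * ((F - B * K) * x) ^ 2 + d * x ^ 2, m11 + (d - a) * x ^ 2]
    let ys : Fin 2 → ℝ := ![(pt - a) / pt, a / pt]
    let zs : Fin 2 → ℝ := ![d / pt, (pt - d) / pt]
    ys ∈ Δ₂ ∧ zs ∈ Δ₂ ∧ IsMixedSaddle M ys zs ∧
    g * x ^ 2 + payoff M ys zs
      = (g + (F + B * W) ^ 2 * p1 - a + d * a / pt) * x ^ 2 := by
  intro pt m11 M ys zs
  have hdp : d < pt := lt_of_le_of_lt (le_max_left d a) hpt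
  have hap : a < pt := lt_of_le_of_lt (le_max_right d a) hpt
  have hpt0 : 0 < pt := ha.trans hap
  have hptne : pt ≠ 0 := ne_of_gt hpt0
  have hys : ys ∈ Δ₂ := by
    refine ⟨?_, ?_, ?_⟩ <;> simp only [ys, Matrix.cons_val_zero, Matrix.cons_val_one, Matrix.head_cons]
    · exact div_nonneg (by linarith) hpt0.le
    · positivity
    · field_simp
      ring
  have hzs : zs ∈ Δ₂ := by
    refine ⟨?_, ?_, ?_⟩ <;> simp only [zs, Matrix.cons_val_zero, Matrix.cons_val_one, Matrix.head_cons]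
    · positivity
    · exact div_nonneg (by linarith) hpt0.le
    · field_simp
      ring
  have key1 : ∀ z ∈ Δ₂, payoff M ys z = m11 + a * (d - pt) / pt * x ^ 2 := by
    rintro z ⟨_, _, hz⟩
    have hz1 : z 1 = 1 - z 0 := by linarith
    simp only [payoff, M, ys, m11, pt, Matrix.cons_val', Matrix.cons_val_zero,
      Matrix.cons_val_one, Matrix.head_cons, Matrix.head_fin_const, Matrix.empty_val',
      Matrix.cons_val_fin_one, Matrix.of_apply, hz1]
    have hptne' : (F + B * W) ^ 2 * p1 - (F - B * K) ^ 2 * p0 ≠ 0 := hptne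
    field_simp
    ring
  have key2 : ∀ y ∈ Δ₂, payoff M y zs = m11 + a * (d - pt) / pt * x ^ 2 := by
    rintro y ⟨_, _, hy⟩
    have hy1 : y 1 = 1 - y 0 := by linarith
    simp only [payoff, M, zs, m11, Matrix.cons_val', Matrix.cons_val_zero,
      Matrix.cons_val_one, Matrix.head_cons, Matrix.head_fin_const, Matrix.empty_val',
      Matrix.cons_val_fin_one, Matrix.of_apply, hy1]
    field_simp
    simp only [pt]
    ring
  have hv : payoff M ys zs = m11 + a * (d - pt) / pt * x ^ 2 := key1 zs hzs
  refine ⟨hys, hzs, ⟨hys, hzs, ?_, ?_⟩, ?_⟩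
  · intro z hz; rw [key1 z hz, hv]
  · intro y hy; rw [key2 y hy, hv]
  · rw [hv]
    simp only [m11]
    field_simp
    ring
end

section
/- Let Q, P0, P1 be symmetric n×n real matrices, let B̃ and W̃ be n×n real matrices, let d > 0 and a > 0 be real numbers, and suppose P̃ := W̃ᵀ P1 W̃ − B̃ᵀ P0 B̃ is positive definite. Then for every nonzero x ∈ ℝⁿ, the exact value expression under adversary control satisfies the upper bound xᵀ(Q − a·I + W̃ᵀ P1 W̃)x + d·a·(xᵀx)²/(xᵀ P̃ x) ≤ xᵀ(Q − a·I + W̃ᵀ P1 W̃ + d·a·P̃⁻¹)x. -/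
open Matrix

open scoped MatrixOrder in
lemma cs_key {n : ℕ} (M : Matrix (Fin n) (Fin n) ℝ) (hM : M.PosDef)
    (x : Fin n → ℝ) :
    (x ⬝ᵥ x) ^ 2 ≤ (x ⬝ᵥ M *ᵥ x) * (x ⬝ᵥ M⁻¹ *ᵥ x) := by
  have hMinv : IsUnit M.det := hM.det_pos.ne'.isUnit
  set S := CFC.sqrt M with hS
  have hSsym : Sᵀ = S := by
    have h := (CFC.sqrt_nonneg M).posSemidef.1
    rwa [IsHermitian, conjTranspose_eq_transpose_of_trivial] at h
  have hSS : S * S = M := CFC.sqrt_mul_sqrt_self M hM.posSemidef.nonneg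
  have hSdet : IsUnit S.det := by
    have : S.det * S.det = M.det := by rw [← det_mul, hSS]
    exact isUnit_of_mul_isUnit_left (by rwa [this])
  set u := S *ᵥ x
  set v := S⁻¹ *ᵥ x
  have gen : ∀ A B : Matrix (Fin n) (Fin n) ℝ, (A *ᵥ x) ⬝ᵥ (B *ᵥ x) = x ⬝ᵥ (Aᵀ * B) *ᵥ x := by
    intro A B
    rw [← mulVec_mulVec, dotProduct_mulVec x, vecMul_transpose]
  have huv : u ⬝ᵥ v = x ⬝ᵥ x := by
    rw [show u ⬝ᵥ v = x ⬝ᵥ (Sᵀ * S⁻¹) *ᵥ x from gen S S⁻¹, hSsym,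
      mul_nonsing_inv _ hSdet, one_mulVec]
  have huu : u ⬝ᵥ u = x ⬝ᵥ M *ᵥ x := by
    rw [show u ⬝ᵥ u = x ⬝ᵥ (Sᵀ * S) *ᵥ x from gen S S, hSsym, hSS]
  have hvv : v ⬝ᵥ v = x ⬝ᵥ M⁻¹ *ᵥ x := by
    have hSinvsym : (S⁻¹)ᵀ = S⁻¹ := by rw [transpose_nonsing_inv, hSsym]
    rw [show v ⬝ᵥ v = x ⬝ᵥ ((S⁻¹)ᵀ * S⁻¹) *ᵥ x from gen S⁻¹ S⁻¹, hSinvsym,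
      ← Matrix.mul_inv_rev, hSS]
  calc (x ⬝ᵥ x) ^ 2 = (∑ i, u i * v i) ^ 2 := by rw [← huv]; rfl
    _ ≤ (∑ i, u i ^ 2) * (∑ i, v i ^ 2) :=
        Finset.sum_mul_sq_le_sq_mul_sq _ _ _
    _ = (x ⬝ᵥ M *ᵥ x) * (x ⬝ᵥ M⁻¹ *ᵥ x) := by
        rw [← huu, ← hvv]; simp [dotProduct, sq]

/-- the exact FlipDyn one-step value under adversary control is
bounded above by the quadratic form given by the approximate recursion matrix. -/
theorem stmt_12 {n : ℕ} (Q P0 P1 Bt Wt : Matrix (Fin n) (Fin n) ℝ)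
    (hQ : Q.IsSymm) (hP0 : P0.IsSymm) (hP1 : P1.IsSymm)
    (d a : ℝ) (hd : 0 < d) (ha : 0 < a)
    (hPt : (Wtᵀ * P1 * Wt - Btᵀ * P0 * Bt).PosDef) :
    ∀ x : Fin n → ℝ, x ≠ 0 →
      x ⬝ᵥ (Q - a • (1 : Matrix (Fin n) (Fin n) ℝ) + Wtᵀ * P1 * Wt) *ᵥ x +
          d * a * (x ⬝ᵥ x) ^ 2 / (x ⬝ᵥ (Wtᵀ * P1 * Wt - Btᵀ * P0 * Bt) *ᵥ x)
        ≤ x ⬝ᵥ (Q - a • (1 : Matrix (Fin n) (Fin n) ℝ) + Wtᵀ * P1 * Wt +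
            (d * a) • (Wtᵀ * P1 * Wt - Btᵀ * P0 * Bt)⁻¹) *ᵥ x := by
  intro x hx
  set M := Wtᵀ * P1 * Wt - Btᵀ * P0 * Bt
  have hpos : 0 < x ⬝ᵥ M *ᵥ x := by
    have := hPt.dotProduct_mulVec_pos hx
    simpa using this
  have hkey := cs_key M hPt x
  have h1 : d * a * (x ⬝ᵥ x) ^ 2 / (x ⬝ᵥ M *ᵥ x) ≤ d * a * (x ⬝ᵥ M⁻¹ *ᵥ x) := by
    rw [div_le_iff₀ hpos]
    have := mul_le_mul_of_nonneg_left hkey (le_of_lt (mul_pos hd ha))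
    nlinarith [this]
  have h2 : x ⬝ᵥ (Q - a • (1 : Matrix (Fin n) (Fin n) ℝ) + Wtᵀ * P1 * Wt +
      (d * a) • M⁻¹) *ᵥ x =
      x ⬝ᵥ (Q - a • (1 : Matrix (Fin n) (Fin n) ℝ) + Wtᵀ * P1 * Wt) *ᵥ x +
      d * a * (x ⬝ᵥ M⁻¹ *ᵥ x) := by
    rw [add_mulVec, dotProduct_add, smul_mulVec, dotProduct_smul]
    ring_nf
  rw [h2]
  linarith
end

section
/- Let D, A be symmetric n×n real positive definite matrices, let P0, P1 be symmetric n×n real matrices, let B̃, W̃ be n×n real matrices, and fix a nonzero x ∈ ℝⁿ such that xᵀ P̃ x > xᵀ A x and xᵀ P̃ x > xᵀ D x, where P̃ := W̃ᵀ P1 W̃ − B̃ᵀ P0 B̃. Let Ξ⁰(x) be the 2×2 matrix with entries m11 = xᵀ B̃ᵀ P0 B̃ x, m12 = xᵀ W̃ᵀ P1 W̃ x − xᵀ A x, m21 = m11 + xᵀ D x, m22 = m11 + xᵀ D x − xᵀ A x. Then, with β̂* := (xᵀ A x)/(xᵀ P̃ x) and γ̂* := 1 − (xᵀ D x)/(xᵀ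 P̃ x), the strategies y* = (β̂*, 1 − β̂*) and z* = (γ̂*, 1 − γ̂*) lie in Δ₂ and form a mixed saddle point of Ξ⁰(x), and the value satisfies y*ᵀ Ξ⁰(x) z* = xᵀ B̃ᵀ P0 B̃ x + xᵀ D x − (xᵀ D x)(xᵀ A x)/(xᵀ P̃ x). -/
open Matrix

/-- n-dimensional FlipDyn, defender-controlled state: the given
strategies form a mixed saddle point of Ξ⁰(x) with the stated value. -/
theorem stmt_13 {n : ℕ} (D A P0 P1 Bt Wt : Matrix (Fin n) (Fin n) ℝ)
    (hD : D.PosDef) (hA : A.PosDef) (hP0 : P0.IsSymm) (hP1 : P1.IsSymm)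
    (x : Fin n → ℝ) (hx : x ≠ 0)
    (hA' : x ⬝ᵥ (Wtᵀ * P1 * Wt - Btᵀ * P0 * Bt) *ᵥ x > x ⬝ᵥ A *ᵥ x)
    (hD' : x ⬝ᵥ (Wtᵀ * P1 * Wt - Btᵀ * P0 * Bt) *ᵥ x > x ⬝ᵥ D *ᵥ x) :
    let qPt : ℝ := x ⬝ᵥ (Wtᵀ * P1 * Wt - Btᵀ * P0 * Bt) *ᵥ x
    let m11 : ℝ := x ⬝ᵥ (Btᵀ * P0 * Bt) *ᵥ x
    let M : Matrix (Fin 2) (Fin 2) ℝ :=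
      !![m11, x ⬝ᵥ (Wtᵀ * P1 * Wt) *ᵥ x - x ⬝ᵥ A *ᵥ x;
         m11 + x ⬝ᵥ D *ᵥ x, m11 + x ⬝ᵥ D *ᵥ x - x ⬝ᵥ A *ᵥ x]
    let β : ℝ := (x ⬝ᵥ A *ᵥ x) / qPt
    let γ : ℝ := 1 - (x ⬝ᵥ D *ᵥ x) / qPt
    let ys : Fin 2 → ℝ := ![β, 1 - β]
    let zs : Fin 2 → ℝ := ![γ, 1 - γ]
    ys ∈ Δ₂ ∧ zs ∈ Δ₂ ∧ IsMixedSaddle M ys zs ∧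
    payoff M ys zs = x ⬝ᵥ (Btᵀ * P0 * Bt) *ᵥ x + x ⬝ᵥ D *ᵥ x -
      (x ⬝ᵥ D *ᵥ x) * (x ⬝ᵥ A *ᵥ x) / qPt := by
  intro qPt m11 M β γ ys zs
  have hqA : 0 < x ⬝ᵥ A *ᵥ x := by
    have := hA.dotProduct_mulVec_pos hx; simpa using this
  have hqD : 0 < x ⬝ᵥ D *ᵥ x := by
    have := hD.dotProduct_mulVec_pos hx; simpa using this
  have hPt : 0 < qPt := lt_trans hqA hA'
  have hPt0 : qPt ≠ 0 := ne_of_gt hPt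
  have hW : x ⬝ᵥ (Wtᵀ * P1 * Wt) *ᵥ x = qPt + m11 := by
    simp only [qPt, m11, Matrix.sub_mulVec, dotProduct_sub]; ring
  have hβ0 : 0 ≤ β := le_of_lt (div_pos hqA hPt)
  have hβ1 : β ≤ 1 := le_of_lt ((div_lt_one hPt).mpr hA')
  have hγd : 0 < (x ⬝ᵥ D *ᵥ x) / qPt := div_pos hqD hPt
  have hγd1 : (x ⬝ᵥ D *ᵥ x) / qPt ≤ 1 := le_of_lt ((div_lt_one hPt).mpr hD')
  have hys : ys ∈ Δ₂ := by
    simp only [Δ₂, Set.mem_setOf_eq, ys, Matrix.cons_val_zero, Matrix.cons_val_one,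
      Matrix.head_cons]
    exact ⟨hβ0, by linarith, by ring⟩
  have hzs : zs ∈ Δ₂ := by
    simp only [Δ₂, Set.mem_setOf_eq, zs, Matrix.cons_val_zero, Matrix.cons_val_one,
      Matrix.head_cons, γ]
    exact ⟨by linarith, by linarith, by ring⟩
  have hpay : ∀ y z : Fin 2 → ℝ, payoff M y z =
      y 0 * m11 * z 0 + y 0 * (qPt + m11 - x ⬝ᵥ A *ᵥ x) * z 1 +
      y 1 * (m11 + x ⬝ᵥ D *ᵥ x) * z 0 +
      y 1 * (m11 + x ⬝ᵥ D *ᵥ x - x ⬝ᵥ A *ᵥ x) * z 1 := by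
    intro y z
    simp [payoff, M, hW]
  have key1 : ∀ z ∈ Δ₂, payoff M ys z =
      m11 + x ⬝ᵥ D *ᵥ x - (x ⬝ᵥ D *ᵥ x) * (x ⬝ᵥ A *ᵥ x) / qPt := by
    intro z hz
    have hz1 : z 1 = 1 - z 0 := by linarith [hz.2.2]
    rw [hpay, hz1]
    simp only [ys, Matrix.cons_val_zero, Matrix.cons_val_one, Matrix.head_cons, β]
    field_simp
    ring
  have key2 : ∀ y ∈ Δ₂, payoff M y zs =
      m11 + x ⬝ᵥ D *ᵥ x - (x ⬝ᵥ D *ᵥ x) * (x ⬝ᵥ A *ᵥ x) / qPt := by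
    intro y hy
    have hy1 : y 1 = 1 - y 0 := by linarith [hy.2.2]
    rw [hpay, hy1]
    simp only [zs, Matrix.cons_val_zero, Matrix.cons_val_one, Matrix.head_cons, γ]
    field_simp
    ring
  have hval : payoff M ys zs =
      m11 + x ⬝ᵥ D *ᵥ x - (x ⬝ᵥ D *ᵥ x) * (x ⬝ᵥ A *ᵥ x) / qPt := key1 zs hzs
  refine ⟨hys, hzs, ⟨hys, hzs, ?_, ?_⟩, ?_⟩
  · intro z hz; exact le_of_eq ((key1 z hz).trans hval.symm)
  · intro y hy; exact le_of_eq (hval.trans (key2 y hy).symm)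
  · rw [hval]
end

section
/- Let D, A be symmetric n×n real positive definite matrices, let P0, P1 be symmetric n×n real matrices, let B̃, W̃ be n×n real matrices, and fix a nonzero x ∈ ℝⁿ such that xᵀ P̃ x > xᵀ A x and xᵀ P̃ x > xᵀ D x, where P̃ := W̃ᵀ P1 W̃ − B̃ᵀ P0 B̃. Let Ξ¹(x) be the 2×2 matrix with entries m11 = xᵀ W̃ᵀ P1 W̃ x, m12 = m11 − xᵀ A x, m21 = xᵀ B̃ᵀ P0 B̃ x + xᵀ D x, m22 = m11 + xᵀ D x − xᵀ A x. Then, with β̂* := (xᵀ A x)/(xᵀ P̃ x) and γ̂* := 1 − (xᵀ D x)/(xᵀ P̃ x), the strategies y* = (1 − β̂*, β̂*) and z* = (1 − γ̂*, γ̂*) lie in Δ₂ and form a mixed saddle point of Ξ¹(x), and the value satisfies y*ᵀ Ξ¹(x) z* = xᵀ W̃ᵀ P1 W̃ x − xᵀ A x + (xᵀ D x)(xᵀ A x)/(xᵀ P̃ x). -/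
open Matrix

/-- n-dimensional FlipDyn, adversary-controlled state: the given
strategies form a mixed saddle point of Ξ¹(x) with the stated value. -/
theorem stmt_14 {n : ℕ} (D A P0 P1 Bt Wt : Matrix (Fin n) (Fin n) ℝ)
    (hD : D.PosDef) (hA : A.PosDef) (hP0 : P0.IsSymm) (hP1 : P1.IsSymm)
    (x : Fin n → ℝ) (hx : x ≠ 0)
    (hA' : x ⬝ᵥ (Wtᵀ * P1 * Wt - Btᵀ * P0 * Bt) *ᵥ x > x ⬝ᵥ A *ᵥ x)
    (hD' : x ⬝ᵥ (Wtᵀ * P1 * Wt - Btᵀ * P0 * Bt) *ᵥ x > x ⬝ᵥ D *ᵥ x) :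
    let qPt : ℝ := x ⬝ᵥ (Wtᵀ * P1 * Wt - Btᵀ * P0 * Bt) *ᵥ x
    let m11 : ℝ := x ⬝ᵥ (Wtᵀ * P1 * Wt) *ᵥ x
    let M : Matrix (Fin 2) (Fin 2) ℝ :=
      !![m11, m11 - x ⬝ᵥ A *ᵥ x;
         x ⬝ᵥ (Btᵀ * P0 * Bt) *ᵥ x + x ⬝ᵥ D *ᵥ x,
         m11 + x ⬝ᵥ D *ᵥ x - x ⬝ᵥ A *ᵥ x]
    let β : ℝ := (x ⬝ᵥ A *ᵥ x) / qPt
    let γ : ℝ := 1 - (x ⬝ᵥ D *ᵥ x) / qPt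
    let ys : Fin 2 → ℝ := ![1 - β, β]
    let zs : Fin 2 → ℝ := ![1 - γ, γ]
    ys ∈ Δ₂ ∧ zs ∈ Δ₂ ∧ IsMixedSaddle M ys zs ∧
    payoff M ys zs = x ⬝ᵥ (Wtᵀ * P1 * Wt) *ᵥ x - x ⬝ᵥ A *ᵥ x +
      (x ⬝ᵥ D *ᵥ x) * (x ⬝ᵥ A *ᵥ x) / qPt := by
  intro qPt m11 M β γ ys zs
  set a : ℝ := x ⬝ᵥ A *ᵥ x with ha_def
  set d : ℝ := x ⬝ᵥ D *ᵥ x with hd_def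
  set b : ℝ := x ⬝ᵥ (Btᵀ * P0 * Bt) *ᵥ x with hb_def
  have ha : 0 < a := by simpa using hA.re_dotProduct_pos hx
  have hd : 0 < d := by simpa using hD.re_dotProduct_pos hx
  have hq : qPt = m11 - b := by
    simp [qPt, m11, hb_def, Matrix.sub_mulVec, dotProduct_sub]
  have hqa : a < qPt := hA'
  have hqd : d < qPt := hD'
  have hq0 : 0 < qPt := lt_trans ha hqa
  have hqne : qPt ≠ 0 := ne_of_gt hq0
  have hβq : β * qPt = a := div_mul_cancel₀ a hqne
  have hβ0 : 0 ≤ β := le_of_lt (div_pos ha hq0)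
  have hβ1 : β ≤ 1 := le_of_lt ((div_lt_one hq0).mpr hqa)
  have hγ0 : 0 ≤ γ := by
    have : d / qPt < 1 := (div_lt_one hq0).mpr hqd
    simp only [γ]; linarith
  have hγ1 : γ ≤ 1 := by
    have : 0 < d / qPt := div_pos hd hq0
    simp only [γ]; linarith
  have hys : ys ∈ Δ₂ := by
    refine ⟨?_, ?_, ?_⟩ <;> simp [ys, Δ₂] <;> linarith
  have hzs : zs ∈ Δ₂ := by
    refine ⟨?_, ?_, ?_⟩ <;> simp [zs, Δ₂] <;> linarith
  have hrow : ∀ z ∈ Δ₂, payoff M ys z = m11 + β * (d - qPt) := by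
    intro z hz
    obtain ⟨hz0, hz1, hzsum⟩ := hz
    simp only [payoff, M, ys, Matrix.cons_val', Matrix.cons_val_zero,
      Matrix.cons_val_one, Matrix.head_cons, Matrix.empty_val',
      Matrix.cons_val_fin_one, Matrix.head_fin_const, Matrix.of_apply]
    linear_combination (m11 + β * d - a) * hzsum + (1 - z 0) * hβq + β * z 0 * hq
  have hcol : ∀ y ∈ Δ₂, payoff M y zs = m11 - a * γ := by
    intro y hy
    obtain ⟨hy0, hy1, hysum⟩ := hy
    simp only [payoff, M, zs, Matrix.cons_val', Matrix.cons_val_zero,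
      Matrix.cons_val_one, Matrix.head_cons, Matrix.empty_val',
      Matrix.cons_val_fin_one, Matrix.head_fin_const, Matrix.of_apply]
    have hγq : (1 - γ) * qPt = d := by
      simp only [γ]; field_simp; rw [hd_def]; ring
    linear_combination (m11 - a * γ) * hysum + y 1 * (1 - γ) * hq - y 1 * hγq
  have hvs : payoff M ys zs = m11 + β * (d - qPt) := hrow zs hzs
  have hvs' : payoff M ys zs = m11 - a * γ := hcol ys hys
  refine ⟨hys, hzs, ⟨hys, hzs, ?_, ?_⟩, ?_⟩
  · intro z hz; rw [hrow z hz, hvs]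
  · intro y hy; rw [hcol y hy, hvs']
  · rw [hvs]
    simp only [β, m11]
    field_simp
    ring
end

section
/- Let v0, v1, d, a be real numbers with d > 0, a > 0, and v1 > v0 + max{d, a}, and let Ξ¹ = [[v1, v1 − a], [v0 + d, v1 + d − a]]. Then the mixed saddle point of Ξ¹ is unique: the pair y* = (1 − a/(v1 − v0), a/(v1 − v0)), z* = (d/(v1 − v0), 1 − d/(v1 − v0)) is a mixed saddle point, and any pair (y, z) ∈ Δ₂ × Δ₂ satisfying yᵀ Ξ¹ z' ≤ yᵀ Ξ¹ z ≤ y'ᵀ Ξ¹ z for all y', z' ∈ Δ₂ equals (y*, z*). -/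
open Matrix

private lemma aux_unique (v0 v1 d a y0 z0 : ℝ) (hd : 0 < d) (ha : 0 < a)
    (hsd : d < v1 - v0) (hsa : a < v1 - v0)
    (hy0 : 0 ≤ y0) (hy01 : y0 ≤ 1) (hz0 : 0 ≤ z0) (hz01 : z0 ≤ 1)
    (hz0α : 0 ≤ z0 * (a - (v1 - v0) * (1 - y0)))
    (hz1α : (1 - z0) * (a - (v1 - v0) * (1 - y0)) ≤ 0)
    (hy1β : 0 ≤ (1 - y0) * ((v1 - v0) * z0 - d))
    (hy0β : y0 * ((v1 - v0) * z0 - d) ≤ 0) :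
    y0 = 1 - a / (v1 - v0) ∧ z0 = d / (v1 - v0) := by
  have hs : (0:ℝ) < v1 - v0 := by linarith
  have hs0 : v1 - v0 ≠ 0 := ne_of_gt hs
  have hα : a - (v1 - v0) * (1 - y0) = 0 := by
    rcases lt_trichotomy (a - (v1 - v0) * (1 - y0)) 0 with h | h | h
    · have hz00 : z0 = 0 := le_antisymm (by nlinarith) hz0
      have hβneg : (v1 - v0) * z0 - d < 0 := by rw [hz00]; linarith
      have hy10 : y0 = 1 := le_antisymm hy01 (by nlinarith)
      rw [hy10] at h; simp at h; linarith
    · exact h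
    · have hz10 : z0 = 1 := le_antisymm hz01 (by nlinarith)
      have hβpos : 0 < (v1 - v0) * z0 - d := by rw [hz10]; linarith
      have hy00 : y0 = 0 := le_antisymm (by nlinarith) hy0
      rw [hy00] at h; simp at h; linarith
  have hy0v : y0 = 1 - a / (v1 - v0) := by
    field_simp
    linarith
  have hβ : (v1 - v0) * z0 - d = 0 := by
    have h1' : a / (v1 - v0) < 1 := by rw [div_lt_one hs]; linarith
    have h2' : 0 < a / (v1 - v0) := by positivity
    have hy0pos : 0 < y0 := by rw [hy0v]; linarith
    have hy0lt : y0 < 1 := by rw [hy0v]; linarith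
    rcases lt_trichotomy ((v1 - v0) * z0 - d) 0 with h | h | h
    · nlinarith
    · exact h
    · nlinarith
  refine ⟨hy0v, ?_⟩
  field_simp
  linarith

/-- uniqueness of the mixed saddle point of the FlipDyn matrix Ξ¹
(adversary in control). -/
theorem stmt_18 (v0 v1 d a : ℝ) (hd : 0 < d) (ha : 0 < a)
    (hv : v1 > v0 + max d a) :
    let M : Matrix (Fin 2) (Fin 2) ℝ := !![v1, v1 - a; v0 + d, v1 + d - a]
    let ys : Fin 2 → ℝ := ![1 - a / (v1 - v0), a / (v1 - v0)]
    let zs : Fin 2 → ℝ := ![d / (v1 - v0), 1 - d / (v1 - v0)]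
    IsMixedSaddle M ys zs ∧
    (∀ y ∈ Δ₂, ∀ z ∈ Δ₂,
      ((∀ z' ∈ Δ₂, payoff M y z' ≤ payoff M y z) ∧
       (∀ y' ∈ Δ₂, payoff M y z ≤ payoff M y' z)) → y = ys ∧ z = zs) := by
  intro M ys zs
  have hsd : d < v1 - v0 := by have := le_max_left d a; linarith
  have hsa : a < v1 - v0 := by have := le_max_right d a; linarith
  have hs : (0:ℝ) < v1 - v0 := by linarith
  have hs0 : v1 - v0 ≠ 0 := ne_of_gt hs
  have hys : ys ∈ Δ₂ := by
    refine ⟨?_, ?_, ?_⟩ <;> simp [ys, Δ₂]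
    · rw [div_le_one hs]; linarith
    · positivity
  have hzs : zs ∈ Δ₂ := by
    refine ⟨?_, ?_, ?_⟩ <;> simp [zs, Δ₂]
    · positivity
    · rw [div_le_one hs]; linarith
  constructor
  · refine ⟨hys, hzs, ?_, ?_⟩
    · intro z hz
      obtain ⟨hz0, hz1, hzsum⟩ := hz
      have h1 : z 1 = 1 - z 0 := by linarith
      have : payoff M ys z = payoff M ys zs := by
        simp only [payoff, M, ys, zs, h1]
        simp only [Matrix.cons_val_zero, Matrix.cons_val_one, Matrix.head_cons,
          Matrix.of_apply, Matrix.cons_val', Matrix.empty_val', Matrix.cons_val_fin_one,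
          Matrix.vecHead]
        field_simp
        ring
      linarith [this.le]
    · intro y hy
      obtain ⟨hy0, hy1, hysum⟩ := hy
      have h1 : y 1 = 1 - y 0 := by linarith
      have : payoff M y zs = payoff M ys zs := by
        simp only [payoff, M, ys, zs, h1]
        simp only [Matrix.cons_val_zero, Matrix.cons_val_one, Matrix.head_cons,
          Matrix.of_apply, Matrix.cons_val', Matrix.empty_val', Matrix.cons_val_fin_one,
          Matrix.vecHead]
        field_simp
        ring
      linarith [this.le]
  · rintro y ⟨hy0, hy1, hysum⟩ z ⟨hz0, hz1, hzsum⟩ ⟨h1, h2⟩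
    have he0 : (![1,0] : Fin 2 → ℝ) ∈ Δ₂ := by constructor <;> norm_num [Δ₂]
    have he1 : (![0,1] : Fin 2 → ℝ) ∈ Δ₂ := by constructor <;> norm_num [Δ₂]
    have A0 := h1 _ he0
    have A1 := h1 _ he1
    have B0 := h2 _ he0
    have B1 := h2 _ he1
    have hy1e : y 1 = 1 - y 0 := by linarith
    have hz1e : z 1 = 1 - z 0 := by linarith
    have hy01 : y 0 ≤ 1 := by linarith
    have hz01 : z 0 ≤ 1 := by linarith
    simp only [payoff, M, Matrix.cons_val_zero, Matrix.cons_val_one, Matrix.head_cons,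
      Matrix.of_apply, Matrix.cons_val', Matrix.empty_val', Matrix.cons_val_fin_one,
      Matrix.vecHead, hy1e, hz1e,
      mul_zero, mul_one, zero_add, add_zero, zero_mul, one_mul] at A0 A1 B0 B1
    have hz0α : 0 ≤ z 0 * (a - (v1 - v0) * (1 - y 0)) := by nlinarith [A1]
    have hz1α : (1 - z 0) * (a - (v1 - v0) * (1 - y 0)) ≤ 0 := by nlinarith [A0]
    have hy1β : 0 ≤ (1 - y 0) * ((v1 - v0) * z 0 - d) := by nlinarith [B0]
    have hy0β : y 0 * ((v1 - v0) * z 0 - d) ≤ 0 := by nlinarith [B1]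
    obtain ⟨hy0v, hz0v⟩ := aux_unique v0 v1 d a (y 0) (z 0) hd ha hsd hsa hy0 hy01 hz0 hz01 hz0α hz1α hy1β hy0β
    have hy1v : y 1 = a / (v1 - v0) := by rw [hy1e, hy0v]; ring
    have hz1v : z 1 = 1 - d / (v1 - v0) := by rw [hz1e, hz0v]
    constructor
    · funext i
      fin_cases i
      · simpa [ys] using hy0v
      · simpa [ys] using hy1v
    · funext i
      fin_cases i
      · simpa [zs] using hz0v
      · simpa [zs] using hz1v
end
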